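/- Let α ∈ (0,1] and M > 0, let v : [0,1] → ℝ be differentiable with derivative v′ satisfying |v′(x) − v′(y)| ≤ M|x − y|^{α} for all x, y ∈ [0,1], and let g(x) := ∫_0^x v(s) ds. Then for every h with 0 < h ≤ 1/2 and every x ∈ [h, 1 − h], |(g(x+h) − g(x−h))/(2h) − v(x)| ≤ M·h^{1+α}/((1 + α)(2 + α)). -/

import Mathlib

open intervalIntegral MeasureTheory Set

lemma int_abs_rpow (p b : ℝ) (hp : 0 ≤ p) (hb : 0 ≤ b) :
    ∫ t in (0:ℝ)..b, |t|^p = b^(p+1)/(p+1) := by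
  rw [intervalIntegral.integral_congr (g := fun t => t ^ p)
    (fun t ht => by
      rw [Set.uIcc_of_le hb] at ht
      simp [abs_of_nonneg ht.1])]
  rw [integral_rpow (Or.inl (by linarith))]
  rw [Real.zero_rpow (by linarith)]
  ring

lemma cont_abs_rpow (p : ℝ) (hp : 0 ≤ p) : Continuous (fun t : ℝ => |t|^p) :=
  continuous_abs.rpow_const (fun _ => Or.inr hp)

lemma int_abs_rpow_neg (p b : ℝ) (hp : 0 ≤ p) (hb : b ≤ 0) :
    ∫ t in b..(0:ℝ), |t|^p = (-b)^(p+1)/(p+1) := by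
  have := intervalIntegral.integral_comp_neg (a := (0:ℝ)) (b := -b) (fun t => |t|^p)
  simp only [abs_neg, neg_neg, neg_zero] at this
  rw [← this, int_abs_rpow p (-b) hp (by linarith)]

lemma int_sym (p x h : ℝ) (hp : 0 ≤ p) (hh : 0 ≤ h) :
    ∫ s in (x-h)..(x+h), |s - x|^p = 2 * h^(p+1)/(p+1) := by
  rw [intervalIntegral.integral_comp_sub_right (fun t => |t|^p) x]
  have h1 : x - h - x = -h := by ring
  have h2 : x + h - x = h := by ring
  rw [h1, h2]
  rw [← intervalIntegral.integral_add_adjacent_intervals (b := (0:ℝ))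
    (((cont_abs_rpow p hp).intervalIntegrable _ _))
    (((cont_abs_rpow p hp).intervalIntegrable _ _))]
  rw [int_abs_rpow p h hp hh, int_abs_rpow_neg p (-h) hp (by linarith)]
  ring_nf

lemma ftc_v (v v' : ℝ → ℝ)
    (hdiff : ∀ x ∈ Set.Icc (0:ℝ) 1, HasDerivWithinAt v (v' x) (Set.Icc (0:ℝ) 1) x)
    (hv'cont : ContinuousOn v' (Set.Icc (0:ℝ) 1))
    (a b : ℝ) (ha : a ∈ Set.Icc (0:ℝ) 1) (hb : b ∈ Set.Icc (0:ℝ) 1) (hab : a ≤ b) :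
    ∫ t in a..b, v' t = v b - v a := by
  have hvcont : ContinuousOn v (Set.Icc (0:ℝ) 1) :=
    fun y hy => (hdiff y hy).continuousWithinAt
  have hsub : Set.Icc a b ⊆ Set.Icc (0:ℝ) 1 := Set.Icc_subset_Icc ha.1 hb.2
  refine intervalIntegral.integral_eq_sub_of_hasDeriv_right_of_le hab
    (hvcont.mono hsub) (fun t ht => ?_)
    ((hv'cont.mono (by rwa [Set.uIcc_of_le hab])).intervalIntegrable)
  have ht0 : 0 < t := lt_of_le_of_lt ha.1 ht.1
  have ht1 : t < 1 := lt_of_lt_of_le ht.2 hb.2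
  exact ((hdiff t ⟨ht0.le, ht1.le⟩).hasDerivAt
    (Icc_mem_nhds ht0 ht1)).hasDerivWithinAt

theorem central_difference_improved_bound
    (α M : ℝ) (hα0 : 0 < α) (hα1 : α ≤ 1) (hM : 0 < M)
    (v v' : ℝ → ℝ)
    (hdiff : ∀ x ∈ Set.Icc (0:ℝ) 1, HasDerivWithinAt v (v' x) (Set.Icc (0:ℝ) 1) x)
    (hv' : ∀ x ∈ Set.Icc (0:ℝ) 1, ∀ y ∈ Set.Icc (0:ℝ) 1,
      |v' x - v' y| ≤ M * |x - y| ^ α)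
    (g : ℝ → ℝ) (hgdef : ∀ x : ℝ, g x = ∫ s in (0:ℝ)..x, v s) :
    ∀ h : ℝ, 0 < h → h ≤ 1 / 2 → ∀ x ∈ Set.Icc h (1 - h),
      |(g (x + h) - g (x - h)) / (2 * h) - v x| ≤
        M * h ^ (1 + α) / ((1 + α) * (2 + α)) := by
  have hvcont : ContinuousOn v (Set.Icc (0:ℝ) 1) :=
    fun y hy => (hdiff y hy).continuousWithinAt
  have h1α : (0:ℝ) < 1 + α := by linarith
  have h2α : (0:ℝ) < 2 + α := by linarith
  -- v' is continuous on [0,1]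
  have hv'cont : ContinuousOn v' (Set.Icc (0:ℝ) 1) := by
    intro y hy
    rw [ContinuousWithinAt, tendsto_iff_dist_tendsto_zero]
    have hbnd : Continuous (fun z : ℝ => M * |z - y| ^ α) :=
      continuous_const.mul
        ((continuous_abs.comp (continuous_id.sub continuous_const)).rpow_const
          (fun _ => Or.inr hα0.le))
    have h0 : M * |y - y| ^ α = 0 := by
      simp [Real.zero_rpow hα0.ne']
    have hb : Filter.Tendsto (fun z => M * |z - y| ^ α)
        (nhdsWithin y (Set.Icc (0:ℝ) 1)) (nhds 0) := by
      have h1 : Filter.Tendsto (fun z => M * |z - y| ^ α) (nhds y)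
          (nhds (M * |y - y| ^ α)) := hbnd.tendsto y
      rw [h0] at h1
      exact h1.mono_left nhdsWithin_le_nhds
    refine squeeze_zero' ?_ ?_ hb
    · exact Filter.Eventually.of_forall (fun z => dist_nonneg)
    · filter_upwards [self_mem_nhdsWithin] with z hz
      rw [Real.dist_eq]
      exact hv' z hz y hy
  intro h hh0 hh2 x hx
  obtain ⟨hxl, hxr⟩ := hx
  have hh : 0 < h := hh0
  have hx0 : (0:ℝ) ≤ x - h := by linarith
  have hx1 : x + h ≤ 1 := by linarith
  have hxm : x ∈ Set.Icc (0:ℝ) 1 := ⟨by linarith, by linarith⟩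
  have hmem01 : ∀ s, x - h ≤ s → s ≤ x + h → s ∈ Set.Icc (0:ℝ) 1 :=
    fun s h1 h2 => ⟨by linarith, by linarith⟩
  -- Taylor bound
  have taylor : ∀ s ∈ Set.Icc (x-h) (x+h),
      |v s - v x - v' x * (s - x)| ≤ M * |s - x|^(1+α) / (1+α) := by
    intro s hs
    have hs01 : s ∈ Set.Icc (0:ℝ) 1 := hmem01 s hs.1 hs.2
    have hbcont : Continuous (fun t : ℝ => M * |t - x| ^ α) :=
      continuous_const.mul
        ((continuous_abs.comp (continuous_id.sub continuous_const)).rpow_const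
          (fun _ => Or.inr hα0.le))
    rcases le_total x s with hle | hle
    · -- x ≤ s
      have hftc : ∫ t in x..s, v' t = v s - v x := ftc_v v v' hdiff hv'cont x s hxm hs01 hle
      have hIv' : IntervalIntegrable v' volume x s :=
        (hv'cont.mono (by rw [Set.uIcc_of_le hle]; exact Set.Icc_subset_Icc hxm.1 hs01.2)).intervalIntegrable
      have hconst : ∫ t in x..s, v' x = v' x * (s - x) := by
        simp [mul_comm]
      have hkey : v s - v x - v' x * (s - x) = ∫ t in x..s, (v' t - v' x) := by
        rw [intervalIntegral.integral_sub hIv' (intervalIntegrable_const), hftc, hconst]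
      rw [hkey]
      have hbound : |∫ t in x..s, (v' t - v' x)| ≤ |∫ t in x..s, M * |t - x| ^ α| := by
        rw [← Real.norm_eq_abs (∫ t in x..s, (v' t - v' x))]
        refine intervalIntegral.norm_integral_le_abs_of_norm_le ?_ (hbcont.intervalIntegrable _ _)
        filter_upwards [ae_restrict_mem measurableSet_uIoc] with t ht
        rw [Set.uIoc_of_le hle] at ht
        have ht01 : t ∈ Set.Icc (0:ℝ) 1 := ⟨by have := ht.1; linarith [hxm.1], le_trans ht.2 hs01.2⟩
        simpa [Real.norm_eq_abs] using hv' t ht01 x hxm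
      have hcomp : ∫ t in x..s, M * |t - x| ^ α = M * ((s - x) ^ (α+1) / (α+1)) := by
        rw [intervalIntegral.integral_const_mul,
          intervalIntegral.integral_comp_sub_right (fun t => |t| ^ α) x]
        rw [show x - x = (0:ℝ) by ring]
        rw [int_abs_rpow α (s - x) hα0.le (by linarith)]
      refine hbound.trans ?_
      rw [hcomp]
      have hnn : 0 ≤ M * ((s - x) ^ (α+1) / (α+1)) := by
        apply mul_nonneg hM.le
        apply div_nonneg (Real.rpow_nonneg (by linarith) _) (by linarith)
      rw [abs_of_nonneg hnn, abs_of_nonneg (by linarith : (0:ℝ) ≤ s - x)]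
      rw [show α + 1 = 1 + α by ring]
      rw [mul_div_assoc]
    · -- s ≤ x
      have hftc : ∫ t in s..x, v' t = v x - v s := ftc_v v v' hdiff hv'cont s x hs01 hxm hle
      have hIv' : IntervalIntegrable v' volume s x :=
        (hv'cont.mono (by rw [Set.uIcc_of_le hle]; exact Set.Icc_subset_Icc hs01.1 hxm.2)).intervalIntegrable
      have hconst : ∫ t in s..x, v' x = v' x * (x - s) := by
        simp [mul_comm]
      have hkey : v s - v x - v' x * (s - x) = -(∫ t in s..x, (v' t - v' x)) := by
        rw [intervalIntegral.integral_sub hIv' (intervalIntegrable_const), hftc, hconst]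
        ring
      rw [hkey, abs_neg]
      have hbound : |∫ t in s..x, (v' t - v' x)| ≤ |∫ t in s..x, M * |t - x| ^ α| := by
        rw [← Real.norm_eq_abs (∫ t in s..x, (v' t - v' x))]
        refine intervalIntegral.norm_integral_le_abs_of_norm_le ?_ (hbcont.intervalIntegrable _ _)
        filter_upwards [ae_restrict_mem measurableSet_uIoc] with t ht
        rw [Set.uIoc_of_le hle] at ht
        have ht01 : t ∈ Set.Icc (0:ℝ) 1 := ⟨le_trans hs01.1 ht.1.le, le_trans ht.2 hxm.2⟩
        simpa [Real.norm_eq_abs] using hv' t ht01 x hxm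
      have hcomp : ∫ t in s..x, M * |t - x| ^ α = M * ((x - s) ^ (α+1) / (α+1)) := by
        rw [intervalIntegral.integral_const_mul,
          intervalIntegral.integral_comp_sub_right (fun t => |t| ^ α) x]
        rw [show x - x = (0:ℝ) by ring]
        rw [int_abs_rpow_neg α (s - x) hα0.le (by linarith)]
        rw [show -(s - x) = x - s by ring]
      refine hbound.trans ?_
      rw [hcomp]
      have hnn : 0 ≤ M * ((x - s) ^ (α+1) / (α+1)) := by
        apply mul_nonneg hM.le
        apply div_nonneg (Real.rpow_nonneg (by linarith) _) (by linarith)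
      rw [abs_of_nonneg hnn, abs_sub_comm, abs_of_nonneg (by linarith : (0:ℝ) ≤ x - s)]
      rw [show α + 1 = 1 + α by ring]
      rw [mul_div_assoc]
  -- integrability of v on subintervals of [0,1]
  have hIv : ∀ a b : ℝ, a ∈ Set.Icc (0:ℝ) 1 → b ∈ Set.Icc (0:ℝ) 1 →
      IntervalIntegrable v volume a b := by
    intro a b ha hb
    exact (hvcont.mono (Set.uIcc_subset_Icc ha hb)).intervalIntegrable
  have hmem1 : (0:ℝ) ∈ Set.Icc (0:ℝ) 1 := ⟨le_refl _, by norm_num⟩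
  have hmemxh : x + h ∈ Set.Icc (0:ℝ) 1 := ⟨by linarith, hx1⟩
  have hmemxh' : x - h ∈ Set.Icc (0:ℝ) 1 := ⟨hx0, by linarith⟩
  have hg1 : g (x+h) - g (x-h) = ∫ s in (x-h)..(x+h), v s := by
    rw [hgdef, hgdef]
    exact intervalIntegral.integral_interval_sub_left (hIv 0 (x+h) hmem1 hmemxh)
      (hIv 0 (x-h) hmem1 hmemxh')
  have hconst : ∫ _s in (x-h)..(x+h), v x = 2 * h * v x := by
    rw [intervalIntegral.integral_const, smul_eq_mul]
    ring_nf
  have hlin : ∫ s in (x-h)..(x+h), v' x * (s - x) = 0 := by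
    rw [intervalIntegral.integral_const_mul]
    have : ∫ s in (x-h)..(x+h), (s - x) = 0 := by
      rw [intervalIntegral.integral_comp_sub_right (fun t => t) x, integral_id]
      ring
    rw [this, mul_zero]
  have hlincont : Continuous (fun s : ℝ => v' x * (s - x)) :=
    continuous_const.mul (continuous_id.sub continuous_const)
  have hw : ∫ s in (x-h)..(x+h), (v s - v x - v' x * (s - x))
      = (g (x+h) - g (x-h)) - 2 * h * v x := by
    rw [intervalIntegral.integral_sub
      ((hIv (x-h) (x+h) hmemxh' hmemxh).sub intervalIntegrable_const)
      (hlincont.intervalIntegrable _ _),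
      intervalIntegral.integral_sub (hIv (x-h) (x+h) hmemxh' hmemxh)
        intervalIntegrable_const, hlin, hconst, hg1]
    ring
  have hrepr : (g (x + h) - g (x - h)) / (2 * h) - v x
      = (∫ s in (x-h)..(x+h), (v s - v x - v' x * (s - x))) / (2 * h) := by
    rw [hw]
    field_simp
  rw [hrepr, abs_div, abs_of_pos (by linarith : (0:ℝ) < 2 * h)]
  have hbcont2 : Continuous (fun s : ℝ => M * |s - x| ^ (1+α) / (1+α)) :=
    (continuous_const.mul
      ((continuous_abs.comp (continuous_id.sub continuous_const)).rpow_const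
        (fun _ => Or.inr h1α.le))).div_const _
  have hmain : |∫ s in (x-h)..(x+h), (v s - v x - v' x * (s - x))|
      ≤ |∫ s in (x-h)..(x+h), M * |s - x| ^ (1+α) / (1+α)| := by
    rw [← Real.norm_eq_abs (∫ s in (x-h)..(x+h), (v s - v x - v' x * (s - x)))]
    refine intervalIntegral.norm_integral_le_abs_of_norm_le ?_ (hbcont2.intervalIntegrable _ _)
    filter_upwards [ae_restrict_mem measurableSet_uIoc] with t ht
    rw [Set.uIoc_of_le (by linarith : x - h ≤ x + h)] at ht
    exact (by simpa [Real.norm_eq_abs] using taylor t ⟨ht.1.le, ht.2⟩)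
  have hcomp2 : ∫ s in (x-h)..(x+h), M * |s - x| ^ (1+α) / (1+α)
      = M / (1+α) * (2 * h ^ (2+α) / (2+α)) := by
    have heq : ∀ s : ℝ, M * |s - x| ^ (1+α) / (1+α) = (M/(1+α)) * |s - x| ^ (1+α) :=
      fun s => by ring
    simp_rw [heq]
    rw [intervalIntegral.integral_const_mul, int_sym (1+α) x h h1α.le hh0.le]
    rw [show (1:ℝ) + α + 1 = 2 + α by ring]
  have hfin : |∫ s in (x-h)..(x+h), M * |s - x| ^ (1+α) / (1+α)|
      = M / (1+α) * (2 * h ^ (2+α) / (2+α)) := by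
    rw [hcomp2, abs_of_nonneg]
    apply mul_nonneg (div_nonneg hM.le h1α.le)
    apply div_nonneg (by positivity) h2α.le
  calc |∫ s in (x-h)..(x+h), (v s - v x - v' x * (s - x))| / (2 * h)
      ≤ (M / (1+α) * (2 * h ^ (2+α) / (2+α))) / (2 * h) := by
        apply div_le_div_of_nonneg_right ?_ (by linarith)
        · rw [← hfin]; exact hmain
    _ = M * h ^ (1 + α) / ((1 + α) * (2 + α)) := by
        rw [show (2:ℝ) + α = 1 + (1 + α) by ring, Real.rpow_add hh0, Real.rpow_one]
        field_simp
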